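/- For every natural number n ≥ 1, it is not the case that Pn(G_n) ≤ P_{n−1}(G_{n−1}). -/

import Mathlib

universe u

namespace SetTheory

/-- Pre-games (as in the older Mathlib's `SetTheory.PGame`, no longer in Mathlib). -/
inductive PGame : Type (u + 1)
  | mk : ∀ α β : Type u, (α → PGame) → (β → PGame) → PGame

/-- The pre-game `0 = { | }`. -/
instance PGame.instZero : Zero PGame :=
  ⟨⟨PEmpty, PEmpty, PEmpty.elim, PEmpty.elim⟩⟩

end SetTheory

/-- Combinatorial games over a poset `A` of atoms: either an atomic game `[a]` for an atom
`a : A`, or a composite game `⟨L|R⟩` where `L` and `R` are nonempty families of games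
(the left and right options). -/
inductive PoGame (A : Type u) : Type (u + 1) where
  | atom : A → PoGame A
  | mk : (xl xr : Type u) → (xl → PoGame A) → (xr → PoGame A) →
      Nonempty xl → Nonempty xr → PoGame A

namespace PoGame

variable {A : Type u}

/-- `G` is an atomic game. -/
def IsAtomic : PoGame A → Prop
  | atom _ => True
  | mk _ _ _ _ _ _ => False

/-- `G` is a left option of the game given as second argument. -/
def IsLeftOption (G : PoGame A) : PoGame A → Prop
  | atom _ => False
  | mk _ _ L _ _ _ => ∃ i, L i = G

/-- `G` is a right option of the game given as second argument. -/
def IsRightOption (G : PoGame A) : PoGame A → Prop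
  | atom _ => False
  | mk _ _ _ R _ _ => ∃ j, R j = G

section Order

variable [PartialOrder A]

mutual
  /-- `Le G H` is the relation `G ≤ H` on games over the poset `A`, defined by mutual
  recursion with `Lf` (the relation `G ⊲ H`): `G ≤ H` iff every left option `G^L`
  satisfies `G^L ⊲ H`, every right option `H^R` satisfies `G ⊲ H^R`, and if `G` or `H`
  is atomic then `G ⊲ H`. -/
  inductive Le : PoGame A → PoGame A → Prop
    | intro (G H : PoGame A)
        (hL : ∀ G', IsLeftOption G' G → Lf G' H)
        (hR : ∀ H', IsRightOption H' H → Lf G H')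
        (hA : IsAtomic G ∨ IsAtomic H → Lf G H) : Le G H

  /-- `Lf G H` is the relation `G ⊲ H` on games over the poset `A`: it holds iff some
  right option `G^R` satisfies `G^R ≤ H`, or some left option `H^L` satisfies `G ≤ H^L`,
  or `G = [a]` and `H = [b]` are atomic with `a ≤ b` in `A`. -/
  inductive Lf : PoGame A → PoGame A → Prop
    | rightOption (G H G' : PoGame A) (h : IsRightOption G' G) (hle : Le G' H) : Lf G H
    | leftOption (G H H' : PoGame A) (h : IsLeftOption H' H) (hle : Le G H') : Lf G H
    | atom (a b : A) (hab : a ≤ b) : Lf (atom a) (atom b)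
end

/-- Two games are equivalent if `G ≤ H` and `H ≤ G`. -/
def GEquiv (G H : PoGame A) : Prop := Le G H ∧ Le H G

/-- `G` is locally monotone if `G ≤ G^L` for every left option `G^L` and `G^R ≤ G` for
every right option `G^R`. -/
def LocallyMonotone (G : PoGame A) : Prop :=
  (∀ G', IsLeftOption G' G → Le G G') ∧ (∀ G', IsRightOption G' G → Le G' G)

/-- `G` is an option (left or right) of `H`. -/
def IsOption (G H : PoGame A) : Prop := IsLeftOption G H ∨ IsRightOption G H

/-- `G` is a position of `H`: `H` itself, an option of `H`, an option of an option, etc. -/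
def IsPosition (G H : PoGame A) : Prop := Relation.ReflTransGen IsOption G H

/-- `G` is monotone if every position of `G` is locally monotone. -/
def Monotone (G : PoGame A) : Prop := ∀ K, IsPosition K G → LocallyMonotone K

end Order

/-- The 5-element linearly ordered set `L5 = {-3, -2, -1, 0, 1}`. -/
abbrev L5 : Type := {a : ℤ // -3 ≤ a ∧ a ≤ 1}

/-- `G` has mean `C`: an atomic game `[a]` has mean `a`, and a composite game has mean `C`
iff every left option has mean `C + 1` and every right option has mean `C - 1`. -/
def HasMean : PoGame L5 → ℤ → Prop
  | atom a, C => (a : ℤ) = C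
  | mk _ _ L R _ _, C => (∀ i, HasMean (L i) (C + 1)) ∧ (∀ j, HasMean (R j) (C - 1))

/-- The game `⟨G | H⟩` with a single left option `G` and a single right option `H`. -/
def ofPair (G H : PoGame A) : PoGame A :=
  mk PUnit PUnit (fun _ => G) (fun _ => H) ⟨PUnit.unit⟩ ⟨PUnit.unit⟩

/-- `⋆ = ⟨-1 | -3⟩`. -/
def star : PoGame L5 := ofPair (atom ⟨-1, by norm_num⟩) (atom ⟨-3, by norm_num⟩)

/-- `M(G) = ⟨1 | G⟩`. -/
def M (G : PoGame L5) : PoGame L5 := ofPair (atom ⟨1, by norm_num⟩) G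

/-- `P(G) = ⟨G | -2⟩`. -/
def P (G : PoGame L5) : PoGame L5 := ofPair G (atom ⟨-2, by norm_num⟩)

/-- `P⋆(G) = ⟨G | ⋆⟩`. -/
def Pstar (G : PoGame L5) : PoGame L5 := ofPair G star

/-- `Pn n G = P G` if `n` is odd, `P⋆ G` if `n` is even. -/
def Pn (n : ℕ) (G : PoGame L5) : PoGame L5 := if Odd n then P G else Pstar G

/-- The sequence `G_0 = [0]`, `G_{n+1} = M (Pn n (G_n))`. -/
def Gseq : ℕ → PoGame L5
  | 0 => atom ⟨0, by norm_num⟩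
  | n + 1 => M (Pn n (Gseq n))

/-- The normal-play game obtained from a game over `L5` by replacing every atom by the
normal-play game `0 = { | }`, keeping the tree of left and right options. -/
def np : PoGame L5 → SetTheory.PGame.{0}
  | atom _ => 0
  | mk xl xr L R _ _ => SetTheory.PGame.mk xl xr (fun i => np (L i)) (fun j => np (R j))

end PoGame

namespace PoGame

private lemma aux_not_lf_atom {a b : L5} (hab : ¬ a ≤ b) : ¬ Lf (atom a) (atom b) := by
  intro h
  cases h with
  | rightOption _ _ G' h hle => exact h
  | leftOption _ _ H' h hle => exact h
  | atom _ _ h => exact hab h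

private lemma aux_isLeftOption_Pn (n : ℕ) (G : PoGame L5) : IsLeftOption G (Pn n G) := by
  unfold Pn
  split <;> exact ⟨PUnit.unit, rfl⟩

private lemma aux_gseq_not_lf :
    ∀ n, ¬ Lf (Gseq n) (atom ⟨-1, by norm_num⟩) := by
  intro n
  induction n with
  | zero =>
    exact aux_not_lf_atom (by rw [Subtype.mk_le_mk]; omega)
  | succ n ih =>
    intro h
    unfold Gseq M ofPair at h
    cases h with
    | rightOption _ _ G' h hle =>
      obtain ⟨j, rfl⟩ := h
      cases hle with
      | intro _ _ hL hR hA =>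
        exact ih (hL (Gseq n) (aux_isLeftOption_Pn n _))
    | leftOption _ _ H' h hle => exact h

private lemma aux_not_le_P_atom (G : PoGame L5)
    (hG : ¬ Lf G (atom ⟨-1, by norm_num⟩)) :
    ¬ Le (P G) (atom ⟨-1, by norm_num⟩) := by
  intro h
  cases h with
  | intro _ _ hL hR hA => exact hG (hL G ⟨PUnit.unit, rfl⟩)

private lemma aux_not_le_atom2_star :
    ¬ Le (atom ⟨-2, by norm_num⟩) star := by
  intro h
  cases h with
  | intro _ _ hL hR hA =>
    exact aux_not_lf_atom (a := ⟨-2, by norm_num⟩) (b := ⟨-3, by norm_num⟩)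
      (by rw [Subtype.mk_le_mk]; omega) (hR _ ⟨PUnit.unit, rfl⟩)

private lemma aux_not_le_star_atom :
    ¬ Le star (atom ⟨-2, by norm_num⟩) := by
  intro h
  cases h with
  | intro _ _ hL hR hA =>
    exact aux_not_lf_atom (a := ⟨-1, by norm_num⟩) (b := ⟨-2, by norm_num⟩)
      (by rw [Subtype.mk_le_mk]; omega) (hL _ ⟨PUnit.unit, rfl⟩)

/-- Case `n` odd: `¬ P(G) ≤ P⋆(H)` whenever `¬ G ⊲ [-1]`. -/
private lemma aux_case_odd (G H : PoGame L5)
    (hG : ¬ Lf G (atom ⟨-1, by norm_num⟩)) :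
    ¬ Le (P G) (Pstar H) := by
  intro h
  cases h with
  | intro _ _ hL hR hA =>
    have hf : Lf (P G) star := hR star ⟨PUnit.unit, rfl⟩
    unfold star ofPair at hf
    rw [show P G = mk PUnit PUnit (fun _ => G)
      (fun _ => atom ⟨-2, by norm_num⟩) ⟨PUnit.unit⟩ ⟨PUnit.unit⟩ from rfl] at hf
    cases hf with
    | rightOption _ _ G' h hle =>
      obtain ⟨j, rfl⟩ := h
      exact aux_not_le_atom2_star hle
    | leftOption _ _ H' h hle =>
      obtain ⟨i, rfl⟩ := h
      exact aux_not_le_P_atom G hG hle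

/-- Case `n` even: `¬ P⋆(G) ≤ P(H)`. -/
private lemma aux_case_even (G H : PoGame L5) :
    ¬ Le (Pstar G) (P H) := by
  intro h
  cases h with
  | intro _ _ hL hR hA =>
    have hf : Lf (Pstar G) (atom ⟨-2, by norm_num⟩) := hR _ ⟨PUnit.unit, rfl⟩
    rw [show Pstar G = mk PUnit PUnit (fun _ => G)
      (fun _ => star) ⟨PUnit.unit⟩ ⟨PUnit.unit⟩ from rfl] at hf
    cases hf with
    | rightOption _ _ G' h hle =>
      obtain ⟨j, rfl⟩ := h
      exact aux_not_le_star_atom hle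
    | leftOption _ _ H' h hle => exact h

end PoGame

open PoGame in
/-- For every natural number `n ≥ 1`, it is not the case that
`Pn(G_n) ≤ P_{n-1}(G_{n-1})`. -/
theorem stmt_10 (n : ℕ) (hn : 1 ≤ n) :
    ¬ Le (Pn n (Gseq n)) (Pn (n - 1) (Gseq (n - 1))) := by
  obtain ⟨m, rfl⟩ := Nat.exists_eq_add_of_le' hn
  simp only [Nat.add_sub_cancel]
  rcases Nat.even_or_odd m with hm | hm
  · have h1 : Odd (m + 1) := Even.add_one hm
    have h2 : ¬ Odd m := by simpa [Nat.not_odd_iff_even] using hm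
    rw [show Pn (m + 1) (Gseq (m + 1)) = P (Gseq (m + 1)) from if_pos h1,
      show Pn m (Gseq m) = Pstar (Gseq m) from if_neg h2]
    exact aux_case_odd _ _ (aux_gseq_not_lf (m + 1))
  · have h1 : ¬ Odd (m + 1) := by simp [Nat.odd_add_one, Nat.not_even_iff_odd, hm]
    have h2 : Odd m := hm
    rw [show Pn (m + 1) (Gseq (m + 1)) = Pstar (Gseq (m + 1)) from if_neg h1,
      show Pn m (Gseq m) = P (Gseq m) from if_pos h2]
    exact aux_case_even _ _
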